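/- Let C be a closed convex subset of ℝ^n, let v, w ∈ C, and let z ∈ ℝ^n. Define the tangent cone of C at v as T = closure { y ∈ ℝ^n : there exist t ≥ 0 and c ∈ C with y = t • (c - v) }. Suppose p ∈ T is a nearest point of T to z, i.e. ‖p - z‖ ≤ ‖y - z‖ for every y ∈ T. Then ⟪v - w, p⟫ ≤ ⟪v - w, z⟫. -/

import Mathlib

open scoped RealInnerProductSpace

/-- Lemma 2 of the paper. The metric projection onto the tangent cone of a
closed convex set `C` at `v ∈ C` does not increase inner products against directions `v - w`
with `w ∈ C`. -/
theorem proj_tangentCone_inner_le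
    (n : ℕ) (C : Set (EuclideanSpace ℝ (Fin n)))
    (hC_closed : IsClosed C) (hC_convex : Convex ℝ C)
    (v w : EuclideanSpace ℝ (Fin n)) (hv : v ∈ C) (hw : w ∈ C)
    (z p : EuclideanSpace ℝ (Fin n))
    (T : Set (EuclideanSpace ℝ (Fin n)))
    (hT : T = closure {y : EuclideanSpace ℝ (Fin n) |
      ∃ t : ℝ, 0 ≤ t ∧ ∃ c ∈ C, y = t • (c - v)})
    (hpT : p ∈ T)
    (hnear : ∀ y ∈ T, ‖p - z‖ ≤ ‖y - z‖) :
    ⟪v - w, p⟫ ≤ ⟪v - w, z⟫ := by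
  set S : Set (EuclideanSpace ℝ (Fin n)) :=
    {y : EuclideanSpace ℝ (Fin n) | ∃ t : ℝ, 0 ≤ t ∧ ∃ c ∈ C, y = t • (c - v)} with hS
  -- S is convex
  have hSconv : Convex ℝ S := by
    rintro x ⟨t₁, ht₁, c₁, hc₁, rfl⟩ y ⟨t₂, ht₂, c₂, hc₂, rfl⟩ a b ha hb hab
    by_cases hs : a * t₁ + b * t₂ = 0
    · have h1 : a * t₁ = 0 := by nlinarith [mul_nonneg ha ht₁, mul_nonneg hb ht₂]
      have h2 : b * t₂ = 0 := by nlinarith [mul_nonneg ha ht₁, mul_nonneg hb ht₂]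
      refine ⟨0, le_refl 0, v, hv, ?_⟩
      rw [smul_smul, smul_smul, h1, h2]
      simp
    · have hspos : 0 < a * t₁ + b * t₂ :=
        lt_of_le_of_ne (by positivity) (Ne.symm hs)
      set s := a * t₁ + b * t₂ with hsdef
      set μ := a * t₁ / s with hμ
      have hμ0 : 0 ≤ μ := div_nonneg (by positivity) hspos.le
      have hμ1 : μ ≤ 1 := by
        rw [hμ, div_le_one hspos, hsdef]
        nlinarith [mul_nonneg hb ht₂]
      refine ⟨s, hspos.le, μ • c₁ + (1 - μ) • c₂,
        hC_convex hc₁ hc₂ hμ0 (by linarith) (by ring), ?_⟩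
      have h1μ : s * (1 - μ) = b * t₂ := by
        have e : s * μ = a * t₁ := by
          rw [hμ]; field_simp
        rw [mul_sub, mul_one, e]
        linarith [hsdef]
      have hμs : s * μ = a * t₁ := by
        rw [hμ]; field_simp
      rw [smul_smul, smul_smul]
      have : μ • c₁ + (1 - μ) • c₂ - v = μ • (c₁ - v) + (1 - μ) • (c₂ - v) := by
        module
      rw [this, smul_add, smul_smul, smul_smul, hμs, h1μ]
  have hTconv : Convex ℝ T := hT ▸ hSconv.closure
  -- S is closed under nonneg scaling, hence T is
  have hTscale : ∀ a : ℝ, 0 ≤ a → ∀ x ∈ T, a • x ∈ T := by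
    intro a ha x hx
    rw [hT] at hx ⊢
    refine map_mem_closure (continuous_const_smul a) hx ?_
    rintro y ⟨t, ht, c, hc, rfl⟩
    exact ⟨a * t, by positivity, c, hc, by rw [smul_smul]⟩
  -- w - v ∈ T
  have hwvT : ∀ t : ℝ, 0 ≤ t → t • (w - v) ∈ T := by
    intro t ht
    rw [hT]
    exact subset_closure ⟨t, ht, w, hw, rfl⟩
  -- p + t • (w - v) ∈ T for t ≥ 0
  have hkey : ∀ t : ℝ, 0 ≤ t → p + t • (w - v) ∈ T := by
    intro t ht
    have hmid : (1/2 : ℝ) • p + (1/2 : ℝ) • (t • (w - v)) ∈ T :=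
      hTconv hpT (hwvT t ht) (by norm_num) (by norm_num) (by norm_num)
    have := hTscale 2 (by norm_num) _ hmid
    have heq : (2 : ℝ) • ((1/2 : ℝ) • p + (1/2 : ℝ) • (t • (w - v)))
        = p + t • (w - v) := by
      rw [smul_add, smul_smul, smul_smul]
      norm_num
    rwa [heq] at this
  -- variational inequality
  set u := w - v
  set q := p - z with hq
  have hineq : 0 ≤ ⟪q, u⟫ := by
    by_contra hneg
    push_neg at hneg
    have hu : u ≠ 0 := by
      intro h
      rw [h, inner_zero_right] at hneg
      exact lt_irrefl 0 hneg
    have hnu : (0 : ℝ) < ‖u‖ ^ 2 := by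
      have := norm_pos_iff.mpr hu
      positivity
    set t := -⟪q, u⟫ / ‖u‖ ^ 2 with htdef
    have htpos : 0 < t := by
      apply div_pos (by linarith) hnu
    have hmem := hkey t htpos.le
    have h1 := hnear _ hmem
    have h2 : ‖q‖ ^ 2 ≤ ‖p + t • u - z‖ ^ 2 := by
      have := h1
      nlinarith [norm_nonneg (p - z), norm_nonneg (p + t • u - z)]
    have hrw : p + t • u - z = q + t • u := by
      rw [hq]; abel
    rw [hrw] at h2
    have hexp : ‖q + t • u‖ ^ 2 = ‖q‖ ^ 2 + 2 * (t * ⟪q, u⟫) + t ^ 2 * ‖u‖ ^ 2 := by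
      rw [@norm_add_sq_real, real_inner_smul_right, norm_smul]
      rw [Real.norm_eq_abs, abs_of_pos htpos]
      ring
    rw [hexp] at h2
    have hcalc : 2 * (t * ⟪q, u⟫) + t ^ 2 * ‖u‖ ^ 2 = -⟪q, u⟫ ^ 2 / ‖u‖ ^ 2 := by
      rw [htdef]
      field_simp
      ring
    have hne : ⟪q, u⟫ ≠ 0 := ne_of_lt hneg
    have hsqpos : (0 : ℝ) < ⟪q, u⟫ ^ 2 := by positivity
    have hdvpos : (0 : ℝ) < ⟪q, u⟫ ^ 2 / ‖u‖ ^ 2 := div_pos hsqpos hnu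
    rw [neg_div] at hcalc
    linarith [h2, hcalc]
  -- conclude
  have h3 : ⟪q, u⟫ = ⟪v - w, z - p⟫ := by
    rw [hq, show v - w = -(w - v) from (neg_sub w v).symm,
      show z - p = -(p - z) from (neg_sub p z).symm, inner_neg_neg, real_inner_comm]
  have h4 : (0:ℝ) ≤ ⟪v - w, z - p⟫ := h3 ▸ hineq
  rw [inner_sub_right] at h4
  linarith
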